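/- arXiv:1704.04833 — 2 statements merged into one kernel-verified Lean document; each statement's English description precedes it below -/
import Mathlib

section
/- Let X ∈ ℝ^{n×p}, D ∈ ℝ^{m×p}, ν > 0, X* := Xᵀ/n, A := ν X*X + DᵀD, and Σ := (I_m − D A⁺ Dᵀ)/ν. Then D A⁺ X* = Σ Σ⁺ (D A⁺ X*) = Σ^{1/2} (Σ⁺)^{1/2} (D A⁺ X*), where M⁺ is the Moore–Penrose pseudoinverse and Σ^{1/2} the PSD square root. -/
open Matrix

/-- `Mplus` is the Moore–Penrose pseudoinverse of `M`. -/
def IsMoorePenrose {a b : Type*} [Fintype a] [Fintype b]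
    (M : Matrix a b ℝ) (Mplus : Matrix b a ℝ) : Prop :=
  M * Mplus * M = M ∧ Mplus * M * Mplus = Mplus ∧
    (M * Mplus)ᵀ = M * Mplus ∧ (Mplus * M)ᵀ = Mplus * M

private lemma mp_unique {a : Type*} [Fintype a]
    {M P1 P2 : Matrix a a ℝ} (h1 : IsMoorePenrose M P1) (h2 : IsMoorePenrose M P2) :
    P1 = P2 := by
  obtain ⟨m1, r1, s1, t1⟩ := h1
  obtain ⟨m2, r2, s2, t2⟩ := h2
  have e2 : Mᵀ = Mᵀ * (M * P2) := by
    conv_lhs => rw [← m2]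
    rw [transpose_mul, s2]
  have hMP : M * P1 = M * P2 := by
    calc M * P1 = (M * P1)ᵀ := s1.symm
      _ = P1ᵀ * Mᵀ := transpose_mul _ _
      _ = P1ᵀ * (Mᵀ * (M * P2)) := by rw [← e2]
      _ = (P1ᵀ * Mᵀ) * (M * P2) := by rw [mul_assoc]
      _ = (M * P1)ᵀ * (M * P2) := by rw [transpose_mul]
      _ = (M * P1) * (M * P2) := by rw [s1]
      _ = ((M * P1) * M) * P2 := by simp only [mul_assoc]
      _ = M * P2 := by rw [m1]
  have e2' : Mᵀ = (P2 * M) * Mᵀ := by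
    conv_lhs => rw [← m2]
    rw [mul_assoc, transpose_mul, t2]
  have hPM : P1 * M = P2 * M := by
    calc P1 * M = (P1 * M)ᵀ := t1.symm
      _ = Mᵀ * P1ᵀ := transpose_mul _ _
      _ = ((P2 * M) * Mᵀ) * P1ᵀ := by rw [← e2']
      _ = (P2 * M) * (Mᵀ * P1ᵀ) := by rw [mul_assoc]
      _ = (P2 * M) * (P1 * M)ᵀ := by rw [transpose_mul]
      _ = (P2 * M) * (P1 * M) := by rw [t1]
      _ = P2 * ((M * P1) * M) := by simp only [mul_assoc]
      _ = P2 * M := by rw [m1]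
  calc P1 = P1 * M * P1 := r1.symm
    _ = (P2 * M) * P1 := by rw [hPM]
    _ = P2 * (M * P1) := by rw [mul_assoc]
    _ = P2 * (M * P2) := by rw [hMP]
    _ = P2 * M * P2 := by rw [mul_assoc]
    _ = P2 := r2

private lemma mp_transpose {a : Type*} [Fintype a]
    {M P : Matrix a a ℝ} (h : IsMoorePenrose M P) : IsMoorePenrose Mᵀ Pᵀ := by
  obtain ⟨m, r, s, t⟩ := h
  refine ⟨?_, ?_, ?_, ?_⟩
  · rw [← transpose_mul, ← transpose_mul, ← mul_assoc, m]
  · rw [← transpose_mul, ← transpose_mul, ← mul_assoc, r]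
  · rw [← transpose_mul, transpose_transpose]; exact t.symm
  · rw [← transpose_mul, transpose_transpose]; exact s.symm

private lemma mp_symm {a : Type*} [Fintype a]
    {M P : Matrix a a ℝ} (hM : Mᵀ = M) (h : IsMoorePenrose M P) : Pᵀ = P :=
  mp_unique (hM ▸ mp_transpose h) h

private lemma eq_zero_of_mul_transpose_self {a b : Type*} [Fintype a] [Fintype b]
    {N : Matrix a b ℝ} (h : N * Nᵀ = 0) : N = 0 := by
  ext i j
  have hii := congrFun (congrFun h i) i
  simp only [Matrix.mul_apply, Matrix.transpose_apply, Matrix.zero_apply] at hii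
  have := (Finset.sum_eq_zero_iff_of_nonneg
    (fun k _ => mul_self_nonneg (N i k))).mp hii j (Finset.mem_univ j)
  simpa using mul_self_eq_zero.mp this

/-- `D A⁺ X* = Σ Σ⁺ (D A⁺ X*) = Σ^{1/2} (Σ⁺)^{1/2} (D A⁺ X*)` where
`A = ν X*X + DᵀD`, `Σ = (I − D A⁺ Dᵀ)/ν`, `X* = Xᵀ/n`. -/
theorem DAdagXstar_eq_Sigma_proj {n m p : ℕ}
    (X : Matrix (Fin n) (Fin p) ℝ) (D : Matrix (Fin m) (Fin p) ℝ) (ν : ℝ) (hν : 0 < ν)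
    (Aplus : Matrix (Fin p) (Fin p) ℝ) (Sigplus SqrtSig SqrtSigplus : Matrix (Fin m) (Fin m) ℝ)
    (Xstar : Matrix (Fin p) (Fin n) ℝ) (hXstar : Xstar = ((n : ℝ))⁻¹ • Xᵀ)
    (A : Matrix (Fin p) (Fin p) ℝ) (hA : A = ν • (Xstar * X) + Dᵀ * D)
    (hAplus : IsMoorePenrose A Aplus)
    (Sig : Matrix (Fin m) (Fin m) ℝ) (hSig : Sig = ν⁻¹ • ((1 : Matrix (Fin m) (Fin m) ℝ) - D * Aplus * Dᵀ))
    (hSigplus : IsMoorePenrose Sig Sigplus)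
    (hSqrt : SqrtSig.PosSemidef ∧ SqrtSig * SqrtSig = Sig)
    (hSqrtPlus : SqrtSigplus.PosSemidef ∧ SqrtSigplus * SqrtSigplus = Sigplus) :
    D * Aplus * Xstar = Sig * Sigplus * (D * Aplus * Xstar) ∧
      D * Aplus * Xstar = SqrtSig * SqrtSigplus * (D * Aplus * Xstar) := by
  obtain ⟨hS_psd, hSS⟩ := hSqrt
  obtain ⟨hT_psd, hTT⟩ := hSqrtPlus
  -- symmetry of A and Aplus
  have hAt : Aᵀ = A := by
    rw [hA, hXstar]
    simp [transpose_add, transpose_smul, transpose_mul, transpose_transpose,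
      Matrix.smul_mul, Matrix.mul_smul]
  have hApt : Aplusᵀ = Aplus := mp_symm hAt hAplus
  have hCt : (D * Aplus * Dᵀ)ᵀ = D * Aplus * Dᵀ := by
    rw [transpose_mul, transpose_mul, transpose_transpose, hApt, Matrix.mul_assoc]
  have hSigt : Sigᵀ = Sig := by
    rw [hSig, transpose_smul, transpose_sub, transpose_one, hCt]
  have hSigpt : Sigplusᵀ = Sigplus := mp_symm hSigt hSigplus
  obtain ⟨a1, a2, a3, a4⟩ := hAplus
  obtain ⟨σ1, σ2, σ3, σ4⟩ := hSigplus
  set P := Sig * Sigplus with hPdef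
  have hP' : Sigplus * Sig = P := by
    calc Sigplus * Sig = (Sigplus * Sig)ᵀ := σ4.symm
      _ = Sigᵀ * Sigplusᵀ := transpose_mul _ _
      _ = P := by rw [hSigt, hSigpt]
  have hPt : Pᵀ = P := σ3
  have hPSig : P * Sig = Sig := σ1
  have hSigP : Sig * P = Sig := by rw [← hP', ← Matrix.mul_assoc, σ1]
  have hSpP : Sigplus * P = Sigplus := by
    rw [hPdef, ← Matrix.mul_assoc]; exact σ2
  have hQSig : (1 - P) * Sig = 0 := by rw [sub_mul, one_mul, hPSig, sub_self]
  have hSigQ : Sig * (1 - P) = 0 := by rw [mul_sub, mul_one, hSigP, sub_self]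
  have hSpQ : Sigplus * (1 - P) = 0 := by rw [mul_sub, mul_one, hSpP, sub_self]
  set Mm := D * Aplus * Xstar with hMdef
  -- transpose of M
  have hMt : Mmᵀ = (n : ℝ)⁻¹ • (X * (Aplus * Dᵀ)) := by
    rw [hMdef, hXstar]
    simp [transpose_mul, transpose_smul, transpose_transpose, hApt,
      Matrix.smul_mul, Matrix.mul_smul, Matrix.mul_assoc]
  -- key identity: M Mᵀ expressed through C := D Aplus Dᵀ
  have hXX : Xstar * X = ν⁻¹ • (A - Dᵀ * D) := by
    rw [hA, add_sub_cancel_right, smul_smul, inv_mul_cancel₀ hν.ne', one_smul]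
  have hkey : Mm * Mmᵀ = ((n : ℝ)⁻¹ * ν⁻¹) •
      ((D * Aplus * Dᵀ) - (D * Aplus * Dᵀ) * (D * Aplus * Dᵀ)) := by
    rw [hMt, Matrix.mul_smul]
    have h1 : Mm * (X * (Aplus * Dᵀ)) =
        (D * Aplus) * ((Xstar * X) * (Aplus * Dᵀ)) := by
      rw [hMdef]; simp only [Matrix.mul_assoc]
    rw [h1, hXX, Matrix.smul_mul, Matrix.mul_smul, smul_smul]
    congr 1
    rw [Matrix.sub_mul, Matrix.mul_sub]
    congr 1
    · calc (D * Aplus) * (A * (Aplus * Dᵀ))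
          = D * (((Aplus * A) * Aplus) * Dᵀ) := by simp only [Matrix.mul_assoc]
        _ = D * (Aplus * Dᵀ) := by rw [a2]
        _ = D * Aplus * Dᵀ := by rw [Matrix.mul_assoc]
    · simp only [Matrix.mul_assoc]
  -- C behaves as identity on (1-P)
  have hνSig : ν • Sig = 1 - D * Aplus * Dᵀ := by
    rw [hSig, smul_smul, mul_inv_cancel₀ hν.ne', one_smul]
  have hC1 : D * Aplus * Dᵀ = 1 - ν • Sig := by rw [hνSig]; abel
  have hQC : (1 - P) * (D * Aplus * Dᵀ) = 1 - P := by
    rw [hC1, mul_sub, mul_one, Matrix.mul_smul, hQSig, smul_zero, sub_zero]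
  -- part 1 : (1-P) Mm = 0
  have hQMM : (1 - P) * (Mm * Mmᵀ) * (1 - P) = 0 := by
    rw [hkey, Matrix.mul_smul, Matrix.smul_mul]
    have hmid : (1 - P) * ((D * Aplus * Dᵀ) - (D * Aplus * Dᵀ) * (D * Aplus * Dᵀ))
        * (1 - P) = 0 := by
      rw [mul_sub (1 - P), hQC, ← Matrix.mul_assoc, hQC, hQC, sub_self, zero_mul]
    rw [hmid, smul_zero]
  have hQM : (1 - P) * Mm = 0 := by
    apply eq_zero_of_mul_transpose_self
    have hsh : ((1 - P) * Mm) * ((1 - P) * Mm)ᵀ = (1 - P) * (Mm * Mmᵀ) * (1 - P) := by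
      rw [transpose_mul, transpose_sub, transpose_one, hPt]
      simp only [Matrix.mul_assoc]
    rw [hsh, hQMM]
  rw [Matrix.sub_mul, Matrix.one_mul, sub_eq_zero] at hQM
  refine ⟨hQM, ?_⟩
  -- part 2 : SqrtSig * SqrtSigplus = P
  have hSt : SqrtSigᵀ = SqrtSig := by
    have := hS_psd.isHermitian.eq
    rwa [conjTranspose_eq_transpose_of_trivial] at this
  have hTt : SqrtSigplusᵀ = SqrtSigplus := by
    have := hT_psd.isHermitian.eq
    rwa [conjTranspose_eq_transpose_of_trivial] at this
  -- P acts as identity on SqrtSig and SqrtSigplus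
  have hQS : (1 - P) * SqrtSig = 0 := by
    apply eq_zero_of_mul_transpose_self
    rw [transpose_mul, transpose_sub, transpose_one, hPt, hSt]
    have h1 : SqrtSig * (SqrtSig * (1 - P)) = 0 := by
      rw [← Matrix.mul_assoc, hSS, hSigQ]
    calc ((1 - P) * SqrtSig) * (SqrtSig * (1 - P))
        = (1 - P) * (SqrtSig * (SqrtSig * (1 - P))) := by simp only [Matrix.mul_assoc]
      _ = 0 := by rw [h1, mul_zero]
  have hQT : (1 - P) * SqrtSigplus = 0 := by
    apply eq_zero_of_mul_transpose_self
    rw [transpose_mul, transpose_sub, transpose_one, hPt, hTt]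
    have h1 : SqrtSigplus * (SqrtSigplus * (1 - P)) = 0 := by
      rw [← Matrix.mul_assoc, hTT, hSpQ]
    calc ((1 - P) * SqrtSigplus) * (SqrtSigplus * (1 - P))
        = (1 - P) * (SqrtSigplus * (SqrtSigplus * (1 - P))) := by simp only [Matrix.mul_assoc]
      _ = 0 := by rw [h1, mul_zero]
  rw [sub_mul, one_mul, sub_eq_zero] at hQS hQT
  have hPS : P * SqrtSig = SqrtSig := hQS.symm
  have hPT : P * SqrtSigplus = SqrtSigplus := hQT.symm
  have hSP : SqrtSig * P = SqrtSig := by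
    have := congrArg transpose hPS
    rwa [transpose_mul, hPt, hSt] at this
  have hTP : SqrtSigplus * P = SqrtSigplus := by
    have := congrArg transpose hPT
    rwa [transpose_mul, hPt, hTt] at this
  -- F := T Σ T = P
  have hF : SqrtSigplus * Sig * SqrtSigplus = P := by
    have f1 : (SqrtSigplus * Sig * SqrtSigplus) * SqrtSigplus = SqrtSigplus := by
      rw [Matrix.mul_assoc (SqrtSigplus * Sig), hTT, Matrix.mul_assoc, ← hPdef, hTP]
    have f2 : (SqrtSigplus * Sig * SqrtSigplus) * Sigplus = Sigplus := by
      rw [← hTT, ← Matrix.mul_assoc, f1, hTT]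
    have f3 : (SqrtSigplus * Sig * SqrtSigplus) * P = P := by
      rw [← hP', ← Matrix.mul_assoc, f2, hP']
    have f4 : (SqrtSigplus * Sig * SqrtSigplus) * P = SqrtSigplus * Sig * SqrtSigplus := by
      rw [Matrix.mul_assoc (SqrtSigplus * Sig), hTP]
    exact f4.symm.trans f3
  -- E := S Σ⁺ S = P
  have hE : SqrtSig * Sigplus * SqrtSig = P := by
    have e1 : (SqrtSig * Sigplus * SqrtSig) * SqrtSig = SqrtSig := by
      rw [Matrix.mul_assoc (SqrtSig * Sigplus), hSS, Matrix.mul_assoc, hP', hSP]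
    have e2 : (SqrtSig * Sigplus * SqrtSig) * Sig = Sig := by
      rw [← hSS, ← Matrix.mul_assoc, e1]
    have e3 : (SqrtSig * Sigplus * SqrtSig) * P = P := by
      rw [hPdef, ← Matrix.mul_assoc, e2]
    have e4 : (SqrtSig * Sigplus * SqrtSig) * P = SqrtSig * Sigplus * SqrtSig := by
      rw [Matrix.mul_assoc (SqrtSig * Sigplus), hSP]
    exact e4.symm.trans e3
  -- G := S T S = S by uniqueness of PSD square roots
  have hG_psd : (SqrtSig * SqrtSigplus * SqrtSig).PosSemidef := by
    have := hT_psd.mul_mul_conjTranspose_same SqrtSig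
    rwa [conjTranspose_eq_transpose_of_trivial, hSt] at this
  have hG_sq : (SqrtSig * SqrtSigplus * SqrtSig) * (SqrtSig * SqrtSigplus * SqrtSig) = Sig := by
    calc (SqrtSig * SqrtSigplus * SqrtSig) * (SqrtSig * SqrtSigplus * SqrtSig)
        = (SqrtSig * SqrtSigplus) * ((SqrtSig * SqrtSig) * (SqrtSigplus * SqrtSig)) := by
          simp only [Matrix.mul_assoc]
      _ = (SqrtSig * SqrtSigplus) * (Sig * (SqrtSigplus * SqrtSig)) := by rw [hSS]
      _ = SqrtSig * ((SqrtSigplus * Sig * SqrtSigplus) * SqrtSig) := by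
          simp only [Matrix.mul_assoc]
      _ = SqrtSig * (P * SqrtSig) := by rw [hF]
      _ = SqrtSig * SqrtSig := by rw [hPS]
      _ = Sig := hSS
  have hG : SqrtSig * SqrtSigplus * SqrtSig = SqrtSig := by
    open scoped MatrixOrder in
    exact (CFC.sq_eq_sq_iff _ _ hG_psd.nonneg hS_psd.nonneg).mp (by rw [pow_two, pow_two, hG_sq, hSS])
  -- R := S T satisfies R² = R, R Rᵀ = P, R P = R, hence R = P
  have hRR : (SqrtSig * SqrtSigplus) * (SqrtSig * SqrtSigplus) = SqrtSig * SqrtSigplus := by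
    calc (SqrtSig * SqrtSigplus) * (SqrtSig * SqrtSigplus)
        = (SqrtSig * SqrtSigplus * SqrtSig) * SqrtSigplus := by simp only [Matrix.mul_assoc]
      _ = SqrtSig * SqrtSigplus := by rw [hG]
  have hRRt : (SqrtSig * SqrtSigplus) * (SqrtSigplus * SqrtSig) = P := by
    calc (SqrtSig * SqrtSigplus) * (SqrtSigplus * SqrtSig)
        = SqrtSig * ((SqrtSigplus * SqrtSigplus) * SqrtSig) := by simp only [Matrix.mul_assoc]
      _ = SqrtSig * (Sigplus * SqrtSig) := by rw [hTT]
      _ = P := by rw [← Matrix.mul_assoc]; exact hE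
  have hRP : (SqrtSig * SqrtSigplus) * P = SqrtSig * SqrtSigplus := by
    rw [Matrix.mul_assoc, hTP]
  have hRP2 : (SqrtSig * SqrtSigplus) * P = P := by
    rw [← hRRt, ← Matrix.mul_assoc, hRR]
  have hR_eq_P : SqrtSig * SqrtSigplus = P := hRP.symm.trans hRP2
  rw [hR_eq_P]
  exact hQM
end

section
/- Let λ, λ_D, Λ_X > 0, and suppose βᵀX*Xβ ≥ λ‖β‖₂² for all β ∈ 𝓛 ∩ 𝓜, the smallest nonzero singular value of D_{S^c} is at least λ_D, and ‖X*X‖₂ ≤ Λ_X². Set ν₀ = 2λ_D²/(λ + 2Λ_X²). Then for every β ∈ 𝓛, βᵀ(ν₀ X*X + D_{S^c}ᵀD_{S^c})β ≥ (λν₀/2)‖β‖₂². -/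
open Matrix

/-- The linear map `w ↦ Dᵀ w` viewed on Euclidean spaces. -/
noncomputable def rscLmap {m p : ℕ} (D : Matrix (Fin m) (Fin p) ℝ) :
    EuclideanSpace ℝ (Fin m) →ₗ[ℝ] EuclideanSpace ℝ (Fin p) :=
  (WithLp.linearEquiv 2 ℝ (Fin p → ℝ)).symm.toLinearMap ∘ₗ Dᵀ.mulVecLin ∘ₗ
    (WithLp.linearEquiv 2 ℝ (Fin m → ℝ)).toLinearMap

/-- Vectors vanishing on `S`, as a submodule of Euclidean space. -/
def rscWsub {m : ℕ} (S : Finset (Fin m)) : Submodule ℝ (EuclideanSpace ℝ (Fin m)) where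
  carrier := {w | ∀ j ∈ S, w j = 0}
  add_mem' := by intro a b ha hb j hj; simp [PiLp.add_apply, ha j hj, hb j hj]
  zero_mem' := by intro j hj; rfl
  smul_mem' := by intro c a ha j hj; simp [PiLp.smul_apply, ha j hj]

lemma rsc_inner_dot {k : ℕ} (x y : EuclideanSpace ℝ (Fin k)) :
    (inner ℝ x y : ℝ) = (x : Fin k → ℝ) ⬝ᵥ (y : Fin k → ℝ) := by
  simp [PiLp.inner_apply, RCLike.inner_apply, dotProduct, mul_comm]

lemma rsc_dot_self_nonneg {k : ℕ} (v : Fin k → ℝ) : 0 ≤ v ⬝ᵥ v :=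
  Finset.sum_nonneg fun i _ => mul_self_nonneg _

/-- If `X*X` is restricted strongly convex on `𝓛 ∩ 𝓜`, the smallest nonzero
singular value of `D_{S^c}` is at least `λ_D`, and `‖X*X‖₂ ≤ Λ_X²`, then with
`ν₀ = 2λ_D²/(λ + 2Λ_X²)`, for every `β ∈ 𝓛` one has
`βᵀ(ν₀ X*X + D_{S^c}ᵀD_{S^c})β ≥ (λν₀/2)‖β‖₂²`. -/
theorem rsc_extension_to_L {n m p : ℕ}
    (X : Matrix (Fin n) (Fin p) ℝ) (D : Matrix (Fin m) (Fin p) ℝ)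
    (S : Finset (Fin m)) (lam lamD LamX : ℝ)
    (hlam : 0 < lam) (hlamD : 0 < lamD) (hLamX : 0 < LamX)
    (hRSC : ∀ β : Fin p → ℝ,
      (∀ w : Fin p → ℝ, X.mulVec w = 0 → D.mulVec w = 0 → β ⬝ᵥ w = 0) →
      (∀ j ∉ S, D.mulVec β j = 0) →
      (X.mulVec β ⬝ᵥ X.mulVec β) / n ≥ lam * (β ⬝ᵥ β))
    (hlamD' : ∀ v : Fin p → ℝ,
      (∃ w : Fin m → ℝ, (∀ j ∈ S, w j = 0) ∧ v = Dᵀ.mulVec w) →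
      (∑ j ∈ Finset.univ.filter (fun j => j ∉ S), (D.mulVec v j) ^ 2) ≥ lamD ^ 2 * (v ⬝ᵥ v))
    (hXX : ∀ β : Fin p → ℝ, (X.mulVec β ⬝ᵥ X.mulVec β) / n ≤ LamX ^ 2 * (β ⬝ᵥ β))
    (ν₀ : ℝ) (hν₀ : ν₀ = 2 * lamD ^ 2 / (lam + 2 * LamX ^ 2)) :
    ∀ β : Fin p → ℝ,
      (∀ w : Fin p → ℝ, X.mulVec w = 0 → D.mulVec w = 0 → β ⬝ᵥ w = 0) →
      ν₀ * ((X.mulVec β ⬝ᵥ X.mulVec β) / n)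
          + (∑ j ∈ Finset.univ.filter (fun j => j ∉ S), (D.mulVec β j) ^ 2)
        ≥ (lam * ν₀ / 2) * (β ⬝ᵥ β) := by
  intro β hβ
  classical
  set R : Submodule ℝ (EuclideanSpace ℝ (Fin p)) := (rscWsub S).map (rscLmap D) with hR
  set βE : EuclideanSpace ℝ (Fin p) := WithLp.toLp 2 β with hβE
  set β'' : EuclideanSpace ℝ (Fin p) := (R.orthogonalProjection βE : EuclideanSpace ℝ (Fin p))
    with hb''
  set β' : EuclideanSpace ℝ (Fin p) := βE - β'' with hb'
  have hmem'' : β'' ∈ R := SetLike.coe_mem _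
  have hperp : β' ∈ Rᗮ := R.sub_starProjection_mem_orthogonal βE
  obtain ⟨w', hw'S, hw'⟩ := hmem''
  have hβ''eq : (β'' : Fin p → ℝ) = Dᵀ.mulVec w' := congrArg WithLp.ofLp hw'.symm
  -- β' is in the kernel of D_{Sᶜ}
  have hDβ' : ∀ j ∉ S, D.mulVec β' j = 0 := by
    intro j hj
    have hwmem : (WithLp.toLp 2 (Pi.single j (1 : ℝ)) : EuclideanSpace ℝ (Fin m)) ∈ rscWsub S := by
      intro k hk
      have hkj : k ≠ j := by rintro rfl; exact hj hk
      exact Pi.single_eq_of_ne hkj 1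
    have hu : rscLmap D (WithLp.toLp 2 (Pi.single j (1 : ℝ))) ∈ R := ⟨_, hwmem, rfl⟩
    have h0 : (inner ℝ (rscLmap D (WithLp.toLp 2 (Pi.single j (1 : ℝ)))) β' : ℝ) = 0 :=
      (Submodule.mem_orthogonal R β').mp hperp _ hu
    rw [rsc_inner_dot] at h0
    have heq : (rscLmap D (WithLp.toLp 2 (Pi.single j (1 : ℝ))) : Fin p → ℝ) ⬝ᵥ (β' : Fin p → ℝ)
        = D.mulVec β' j := by
      show Dᵀ.mulVec (Pi.single j (1 : ℝ)) ⬝ᵥ (β' : Fin p → ℝ) = _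
      rw [Matrix.mulVec_transpose, ← dotProduct_mulVec, single_dotProduct, one_mul]
    rw [heq] at h0
    exact h0
  -- β'' is orthogonal to ker X ∩ ker D
  have hβ''ker : ∀ w : Fin p → ℝ, D.mulVec w = 0 → (β'' : Fin p → ℝ) ⬝ᵥ w = 0 := by
    intro w hw
    rw [hβ''eq, Matrix.mulVec_transpose, ← dotProduct_mulVec, hw, dotProduct_zero]
  -- β' satisfies the first RSC hypothesis
  have hβ'perp : ∀ w : Fin p → ℝ, X.mulVec w = 0 → D.mulVec w = 0 →
      (β' : Fin p → ℝ) ⬝ᵥ w = 0 := by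
    intro w hXw hDw
    have h0 : β ⬝ᵥ w = 0 := hβ w hXw hDw
    have hfun' : (β : Fin p → ℝ) = (β' : Fin p → ℝ) + (β'' : Fin p → ℝ) := by
      funext i; simp [hb', hβE]
    have h1 : (β' : Fin p → ℝ) ⬝ᵥ w + (β'' : Fin p → ℝ) ⬝ᵥ w = 0 := by
      rw [← add_dotProduct, ← hfun']; exact h0
    have h2 := hβ''ker w hDw
    linarith
  -- decomposition of β as functions
  have hfun : (β : Fin p → ℝ) = (β' : Fin p → ℝ) + (β'' : Fin p → ℝ) := by
    funext i; simp [hb', hβE]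
  -- orthogonality of β' and β''
  have hortho : (β' : Fin p → ℝ) ⬝ᵥ (β'' : Fin p → ℝ) = 0 := by
    have h0 : (inner ℝ (β'' : EuclideanSpace ℝ (Fin p)) β' : ℝ) = 0 :=
      (Submodule.mem_orthogonal R β').mp hperp β'' (hw' ▸ ⟨_, hw'S, rfl⟩)
    rw [rsc_inner_dot] at h0
    rw [dotProduct_comm]
    exact h0
  have hdecomp : (β ⬝ᵥ β : ℝ) = (β' : Fin p → ℝ) ⬝ᵥ β' + (β'' : Fin p → ℝ) ⬝ᵥ β'' := by
    rw [hfun, add_dotProduct, dotProduct_add, dotProduct_add, hortho,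
      dotProduct_comm (β'' : Fin p → ℝ) (β' : Fin p → ℝ), hortho]
    ring
  -- RSC on β'
  have hQp := hRSC β' hβ'perp hDβ'
  -- operator norm bound on β''
  have hQpp := hXX β''
  -- singular value bound via β''
  have hsum : (∑ j ∈ Finset.univ.filter (fun j => j ∉ S), (D.mulVec β j) ^ 2)
      ≥ lamD ^ 2 * ((β'' : Fin p → ℝ) ⬝ᵥ β'') := by
    have h1 := hlamD' β'' ⟨w', hw'S, hβ''eq⟩
    have h2 : (∑ j ∈ Finset.univ.filter (fun j => j ∉ S), (D.mulVec β j) ^ 2)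
        = ∑ j ∈ Finset.univ.filter (fun j => j ∉ S), (D.mulVec β'' j) ^ 2 := by
      refine Finset.sum_congr rfl fun j hj => ?_
      have hj' : j ∉ S := (Finset.mem_filter.mp hj).2
      have : D.mulVec β j = D.mulVec β' j + D.mulVec β'' j := by
        rw [hfun, Matrix.mulVec_add]; rfl
      rw [this, hDβ' j hj', zero_add]
    rw [h2]; exact h1
  -- quadratic form almost-convexity bound
  have hQn : (X.mulVec β ⬝ᵥ X.mulVec β) / n
      ≥ ((X.mulVec β' ⬝ᵥ X.mulVec β') / n) / 2 - (X.mulVec β'' ⬝ᵥ X.mulVec β'') / n := by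
    set a : Fin n → ℝ := X.mulVec β with ha
    set a' : Fin n → ℝ := X.mulVec β' with ha'
    set a'' : Fin n → ℝ := X.mulVec β'' with ha''
    have haeq : a = a' + a'' := by rw [ha, hfun, Matrix.mulVec_add]
    have hnn := rsc_dot_self_nonneg (a + a'')
    have hexp1 : (a + a'') ⬝ᵥ (a + a'') = a ⬝ᵥ a + 2 * (a ⬝ᵥ a'') + a'' ⬝ᵥ a'' := by
      rw [add_dotProduct, dotProduct_add, dotProduct_add,
        dotProduct_comm a'' a]
      ring
    have hexp2 : a' ⬝ᵥ a' = a ⬝ᵥ a + 2 * (a ⬝ᵥ a'') + a'' ⬝ᵥ a''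
        + 2 * ((a' ⬝ᵥ a') - (a ⬝ᵥ a + 2 * (a ⬝ᵥ a'') + a'' ⬝ᵥ a'')) / 2 := by ring
    have hkey : a' ⬝ᵥ a' ≤ 2 * (a ⬝ᵥ a) + 2 * (a'' ⬝ᵥ a'') := by
      have h3 : a' ⬝ᵥ a' = a ⬝ᵥ a - 2 * (a ⬝ᵥ a'') + a'' ⬝ᵥ a'' := by
        have ha'sub : a' = a - a'' := by rw [haeq, add_sub_cancel_right]
        rw [ha'sub, sub_dotProduct, dotProduct_sub, dotProduct_sub,
          dotProduct_comm a'' a]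
        ring
      rw [hexp1] at hnn
      linarith
    rcases Nat.eq_zero_or_pos n with hn | hn
    · subst hn; simp
    · have hnR : (0 : ℝ) < n := Nat.cast_pos.mpr hn
      rw [ge_iff_le, sub_le_iff_le_add, ← add_div, div_div, add_div]
      calc (a' ⬝ᵥ a') / (n * 2) ≤ (2 * (a ⬝ᵥ a) + 2 * (a'' ⬝ᵥ a'')) / (n * 2) := by
            apply div_le_div_of_nonneg_right hkey; positivity
        _ = (a ⬝ᵥ a) / n + (a'' ⬝ᵥ a'') / n := by field_simp
  -- final arithmetic
  have hdenom : (0 : ℝ) < lam + 2 * LamX ^ 2 := by positivity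
  have hν0pos : 0 < ν₀ := by rw [hν₀]; positivity
  have hkey : ν₀ * (lam + 2 * LamX ^ 2) = 2 * lamD ^ 2 := by
    rw [hν₀]; field_simp
  set Qn := (X.mulVec β ⬝ᵥ X.mulVec β) / n
  set Qp := (X.mulVec β' ⬝ᵥ X.mulVec β') / (n : ℝ)
  set Qpp := (X.mulVec β'' ⬝ᵥ X.mulVec β'') / (n : ℝ)
  set P := (β' : Fin p → ℝ) ⬝ᵥ (β' : Fin p → ℝ)
  set PP := (β'' : Fin p → ℝ) ⬝ᵥ (β'' : Fin p → ℝ)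
  have hPP : 0 ≤ PP := rsc_dot_self_nonneg _
  have h1 : ν₀ * (Qp / 2 - Qpp) ≤ ν₀ * Qn := mul_le_mul_of_nonneg_left hQn hν0pos.le
  have h2 : ν₀ * (lam * P) ≤ ν₀ * Qp := mul_le_mul_of_nonneg_left hQp hν0pos.le
  have h3 : ν₀ * Qpp ≤ ν₀ * (LamX ^ 2 * PP) := mul_le_mul_of_nonneg_left hQpp hν0pos.le
  have h4 : lamD ^ 2 * PP = ν₀ * lam / 2 * PP + ν₀ * LamX ^ 2 * PP := by
    linear_combination (-(PP) / 2) * hkey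
  rw [hdecomp]
  nlinarith [h1, h2, h3, h4, hsum]
end
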